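/- Fix a, b > 0 with a < b, 0 < x₀ < x₁ < 1, γ > 0, and a strictly convex function Φ : ℝ → ℝ of class C² with Φ'' continuous and strictly positive, such that limsup_{w→−∞} Φ''(z+w)/Φ''(w) < b/a uniformly for z in compact subsets of (0,∞), i.e., for every compact K ⊂ (0,∞) there exist W and c < b/a with Φ''(z+w)/Φ''(w) ≤ c for all z ∈ K and w ≤ −W. Let 0 < T < ∞ and let D₁, D₂ : [0,T] → ℝ be continuous, differentiable on [0,T), with D₁(0), D₂(0) ≥ γ, strictly positive on [0,T), satisfying D₁'(t) = a² Φ''(u₀(t))/D₁(t)² and D₂'(t) = (a−b)(a Φ''(u₀(t)) − b Φ''(u₁(t)))/D₂(t)², where u₀(t) = a(x₁−x₀)/D₁(t) + (a−b)(1−x₁)/D₂(t) and u₁(t) = (a−b)(1−x₁)/D₂(t). Then D₂(T) > 0. -/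
import Mathlib


open MeasureTheory Set Filter

/-- For the δ-source gradient-flow ODE system with `a < b` and a
strictly convex entropy with `Φ'' > 0` such that
`limsup_{w→−∞} Φ''(z+w)/Φ''(w) < b/a` uniformly for `z` in compact subsets of `(0,∞)`
(for every such compact `K` there exist `W` and `c < b/a` with
`Φ''(z+w)/Φ''(w) ≤ c` for all `z ∈ K`, `w ≤ −W`), one has `D₂(T) > 0`. -/
theorem stmt_19
    (a b : ℝ) (ha : 0 < a) (hb : 0 < b) (hab : a < b)
    (x₀ x₁ : ℝ) (hx₀ : 0 < x₀) (hx01 : x₀ < x₁) (hx₁ : x₁ < 1)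
    (γ : ℝ) (hγ : 0 < γ)
    (Φ : ℝ → ℝ) (hΦ : ContDiff ℝ 2 Φ) (hconv : StrictConvexOn ℝ univ Φ)
    (hΦ''pos : ∀ v : ℝ, 0 < iteratedDeriv 2 Φ v)
    (hlimsup : ∀ K : Set ℝ, IsCompact K → K ⊆ Ioi 0 →
      ∃ W c : ℝ, c < b / a ∧ ∀ z ∈ K, ∀ w : ℝ, w ≤ -W →
        iteratedDeriv 2 Φ (z + w) / iteratedDeriv 2 Φ w ≤ c)
    (T : ℝ) (hT : 0 < T)
    (D₁ D₂ : ℝ → ℝ)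
    (hD₁c : ContinuousOn D₁ (Icc 0 T)) (hD₂c : ContinuousOn D₂ (Icc 0 T))
    (hD₁pos : ∀ t ∈ Ico (0:ℝ) T, 0 < D₁ t) (hD₂pos : ∀ t ∈ Ico (0:ℝ) T, 0 < D₂ t)
    (hD₁0 : γ ≤ D₁ 0) (hD₂0 : γ ≤ D₂ 0)
    (u₀ u₁ : ℝ → ℝ)
    (hu₀ : ∀ t, u₀ t = a * (x₁ - x₀) / D₁ t + (a - b) * (1 - x₁) / D₂ t)
    (hu₁ : ∀ t, u₁ t = (a - b) * (1 - x₁) / D₂ t)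
    (hODE₁ : ∀ t ∈ Ico (0:ℝ) T,
      HasDerivWithinAt D₁ (a ^ 2 * iteratedDeriv 2 Φ (u₀ t) / (D₁ t) ^ 2) (Icc 0 T) t)
    (hODE₂ : ∀ t ∈ Ico (0:ℝ) T,
      HasDerivWithinAt D₂
        ((a - b) * (a * iteratedDeriv 2 Φ (u₀ t) - b * iteratedDeriv 2 Φ (u₁ t)) / (D₂ t) ^ 2)
        (Icc 0 T) t) :
    0 < D₂ T := by

  -- D₁ is strictly increasing, hence ≥ γ
  have hD1mono : StrictMonoOn D₁ (Icc 0 T) := by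
    apply strictMonoOn_of_deriv_pos (convex_Icc 0 T) hD₁c
    intro x hx
    rw [interior_Icc] at hx
    have hx' : x ∈ Ico (0:ℝ) T := ⟨hx.1.le, hx.2⟩
    have hd := (hODE₁ x hx').hasDerivAt (Icc_mem_nhds hx.1 hx.2)
    rw [hd.deriv]
    have h1 := hΦ''pos (u₀ x)
    have h2 := hD₁pos x hx'
    positivity
  have hD1γ : ∀ t ∈ Icc (0:ℝ) T, γ ≤ D₁ t := by
    intro t ht
    rcases eq_or_lt_of_le ht.1 with h | h
    · rw [← h]; exact hD₁0
    · exact hD₁0.trans (hD1mono (left_mem_Icc.mpr hT.le) ht h).le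
  -- upper bound for D₁
  obtain ⟨tM, htM, hM⟩ := isCompact_Icc.exists_isMaxOn ⟨0, left_mem_Icc.mpr hT.le⟩ hD₁c
  set M := D₁ tM with hMdef
  have hγM : γ ≤ M := hD1γ tM htM
  have hMpos : 0 < M := lt_of_lt_of_le hγ hγM
  -- compact set K
  set K : Set ℝ := Icc (a * (x₁ - x₀) / M) (a * (x₁ - x₀) / γ) with hKdef
  have hnum : 0 < a * (x₁ - x₀) := by nlinarith
  have hKsub : K ⊆ Ioi 0 := by
    intro y hy
    have : 0 < a * (x₁ - x₀) / M := by positivity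
    exact lt_of_lt_of_le this hy.1
  obtain ⟨W, c, hc, hWc⟩ := hlimsup K isCompact_Icc hKsub
  set W' : ℝ := max W 1 with hW'def
  have hW'pos : (0:ℝ) < W' := lt_of_lt_of_le one_pos (le_max_right W 1)
  have hba : 0 < (b - a) * (1 - x₁) := by nlinarith
  set ε : ℝ := min γ ((b - a) * (1 - x₁) / W') with hεdef
  have hεpos : 0 < ε := lt_min hγ (by positivity)
  have hεγ : ε ≤ γ := min_le_left _ _
  -- key: if D₂ t ≤ ε then D₂' t > 0
  have hderiv : ∀ t ∈ Ico (0:ℝ) T, D₂ t ≤ ε →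
      0 < (a - b) * (a * iteratedDeriv 2 Φ (u₀ t) - b * iteratedDeriv 2 Φ (u₁ t)) / (D₂ t) ^ 2 := by
    intro t ht hle
    have hD2t := hD₂pos t ht
    have hu1 : u₁ t ≤ -W' := by
      have h1 : D₂ t ≤ (b - a) * (1 - x₁) / W' := hle.trans (min_le_right _ _)
      have h2 : D₂ t * W' ≤ (b - a) * (1 - x₁) := (le_div_iff₀ hW'pos).mp h1
      rw [hu₁ t, div_le_iff₀ hD2t]
      nlinarith
    have hz : a * (x₁ - x₀) / D₁ t ∈ K := by
      have hl := hD1γ t (Ico_subset_Icc_self ht)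
      have hu := hM (Ico_subset_Icc_self ht)
      have hD1t : 0 < D₁ t := hD₁pos t ht
      constructor
      · exact div_le_div_of_nonneg_left hnum.le hD1t hu
      · exact div_le_div_of_nonneg_left hnum.le hγ hl
    have hratio := hWc _ hz (u₁ t) (hu1.trans (neg_le_neg (le_max_left W 1)))
    have hzw : a * (x₁ - x₀) / D₁ t + u₁ t = u₀ t := by rw [hu₀, hu₁]
    rw [hzw] at hratio
    have hΦ1 := hΦ''pos (u₁ t)
    have hΦ0 := hΦ''pos (u₀ t)
    have h3 : iteratedDeriv 2 Φ (u₀ t) ≤ c * iteratedDeriv 2 Φ (u₁ t) :=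
      (div_le_iff₀ hΦ1).mp hratio
    have hac : c * a < b := (lt_div_iff₀ ha).mp hc
    have hneg : a * iteratedDeriv 2 Φ (u₀ t) - b * iteratedDeriv 2 Φ (u₁ t) < 0 := by
      nlinarith
    have hnum2 : 0 < (a - b) * (a * iteratedDeriv 2 Φ (u₀ t) - b * iteratedDeriv 2 Φ (u₁ t)) :=
      mul_pos_of_neg_of_neg (by linarith) hneg
    exact div_pos hnum2 (by positivity)
  -- D₂ ≥ ε on [0, T)
  have heps : ∀ t ∈ Ico (0:ℝ) T, ε ≤ D₂ t := by
    by_contra hcon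
    push_neg at hcon
    obtain ⟨s, hs, hslt⟩ := hcon
    set A : Set ℝ := Icc 0 s ∩ D₂ ⁻¹' Ici ε with hAdef
    have hA0 : (0:ℝ) ∈ A := ⟨⟨le_refl 0, hs.1⟩, le_trans hεγ hD₂0⟩
    have hAcl : IsClosed A := by
      apply ContinuousOn.preimage_isClosed_of_isClosed
        (hD₂c.mono (Icc_subset_Icc le_rfl hs.2.le)) isClosed_Icc isClosed_Ici
    have hAbdd : BddAbove A := ⟨s, fun x hx => hx.1.2⟩
    set m : ℝ := sSup A with hmdef
    have hmA : m ∈ A := hAcl.csSup_mem ⟨0, hA0⟩ hAbdd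
    have hms : m ≤ s := hmA.1.2
    have hmε : ε ≤ D₂ m := hmA.2
    have hmlt : m < s := lt_of_le_of_ne hms (fun h => by rw [h] at hmε; linarith)
    have hlt : ∀ t ∈ Ioc m s, D₂ t < ε := by
      intro t ht
      by_contra h
      push_neg at h
      have : t ∈ A := ⟨⟨le_trans hmA.1.1 ht.1.le, ht.2⟩, h⟩
      exact absurd (le_csSup hAbdd this) (not_le.mpr ht.1)
    have hD2mono : StrictMonoOn D₂ (Icc m s) := by
      apply strictMonoOn_of_deriv_pos (convex_Icc m s)
        (hD₂c.mono (Icc_subset_Icc hmA.1.1 hs.2.le))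
      intro x hx
      rw [interior_Icc] at hx
      have hx0 : 0 < x := lt_of_le_of_lt hmA.1.1 hx.1
      have hxT : x < T := lt_trans hx.2 hs.2
      have hx' : x ∈ Ico (0:ℝ) T := ⟨hx0.le, hxT⟩
      have hd := (hODE₂ x hx').hasDerivAt (Icc_mem_nhds hx0 hxT)
      rw [hd.deriv]
      exact hderiv x hx' (hlt x ⟨hx.1, hx.2.le⟩).le
    have := hD2mono ⟨le_refl m, hms⟩ ⟨hmlt.le, le_refl s⟩ hmlt
    linarith
  -- conclude at T by continuity
  have htend : Filter.Tendsto D₂ (nhdsWithin T (Ico 0 T)) (nhds (D₂ T)) :=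
    ((hD₂c T (right_mem_Icc.mpr hT.le)).mono Ico_subset_Icc_self)
  have hne : (nhdsWithin T (Ico (0:ℝ) T)).NeBot := by
    rw [← mem_closure_iff_nhdsWithin_neBot, closure_Ico hT.ne]
    exact right_mem_Icc.mpr hT.le
  have hfin : ε ≤ D₂ T :=
    ge_of_tendsto htend (eventually_mem_nhdsWithin.mono (fun x hx => heps x hx))
  linarith
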